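/- Let a, b ∈ ℝ³ with ‖a‖ ≤ 1 and ‖b‖ ≤ 1, and let ρ0 = (1/2)(I + a₁σ_x + a₂σ_y + a₃σ_z) and ρ1 = (1/2)(I + b₁σ_x + b₂σ_y + b₃σ_z) be the corresponding 2×2 density matrices, where σ_x = [[0,1],[1,0]], σ_y = [[0,−i],[i,0]], σ_z = [[1,0],[0,−1]] are the Pauli matrices. Then the quantum fidelity satisfies tr √(ρ1^{1/2} ρ0 ρ1^{1/2}) = (1/√2) · √( 1 + a·b + √(1 − ‖a‖²) · √(1 − ‖b‖²) ), where a·b is the Euclidean dot product. -/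

import Mathlib

open Matrix
open scoped ComplexOrder

namespace Matrix.PosSemidef

variable {n : Type*} [Fintype n] [DecidableEq n] {𝕜 : Type*} [RCLike 𝕜]
  {A : Matrix n n 𝕜} (hA : PosSemidef A)

/-- The square root of a positive semidefinite matrix (as in the older Mathlib). -/
noncomputable def sqrt : Matrix n n 𝕜 :=
  hA.1.eigenvectorUnitary.1 * diagonal ((↑) ∘ (√·) ∘ hA.1.eigenvalues) *
  (star hA.1.eigenvectorUnitary : Matrix n n 𝕜)

lemma posSemidef_sqrt : PosSemidef hA.sqrt := by
  unfold sqrt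
  have hd : PosSemidef (diagonal (((↑) ∘ (√·) ∘ hA.1.eigenvalues : n → 𝕜))) := by
    refine posSemidef_diagonal_iff.mpr fun i ↦ ?_
    rw [Function.comp_apply, RCLike.nonneg_iff]
    constructor
    · simp only [Function.comp_apply, RCLike.ofReal_re]; exact Real.sqrt_nonneg _
    · simp only [Function.comp_apply, RCLike.ofReal_im]
  exact hd.mul_mul_conjTranspose_same _

end Matrix.PosSemidef

lemma mySqrtMulSelf {n : Type*} [Fintype n] [DecidableEq n] {A : Matrix n n ℂ}
    (hA : A.PosSemidef) : hA.sqrt * hA.sqrt = A := by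
  have hU := Matrix.mem_unitaryGroup_iff'.mp hA.1.eigenvectorUnitary.2
  conv_rhs => rw [hA.1.spectral_theorem, Unitary.conjStarAlgAut_apply]
  rw [Matrix.PosSemidef.sqrt]
  simp only [Matrix.mul_assoc]
  rw [← Matrix.mul_assoc (star _ : Matrix n n ℂ) _ _, hU, Matrix.one_mul,
    ← Matrix.mul_assoc (diagonal _) (diagonal _), diagonal_mul_diagonal]
  congr 3
  funext i
  simp only [Function.comp_apply]
  rw [← RCLike.ofReal_mul, Real.mul_self_sqrt (hA.eigenvalues_nonneg i)]

lemma myTraceSqrt {n : Type*} [Fintype n] [DecidableEq n] {A : Matrix n n ℂ}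
    (hA : A.PosSemidef) :
    hA.sqrt.trace = ∑ i, (Real.sqrt (hA.1.eigenvalues i) : ℂ) := by
  rw [Matrix.PosSemidef.sqrt, Matrix.trace_mul_cycle,
    Matrix.mem_unitaryGroup_iff'.mp hA.1.eigenvectorUnitary.2, one_mul, trace_diagonal]
  simp

lemma myTraceEig {n : Type*} [Fintype n] [DecidableEq n] {A : Matrix n n ℂ}
    (hA : A.IsHermitian) :
    A.trace = ∑ i, (hA.eigenvalues i : ℂ) := by
  conv_lhs => rw [hA.spectral_theorem, Unitary.conjStarAlgAut_apply]
  rw [Matrix.trace_mul_cycle,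
    Matrix.mem_unitaryGroup_iff'.mp hA.eigenvectorUnitary.2, one_mul, trace_diagonal]
  simp

/-- The sandwiched matrix `ρ1^{1/2} ρ0 ρ1^{1/2}` is positive semidefinite. -/
noncomputable def sandwichPosSemidef {D : ℕ} {ρ0 ρ1 : Matrix (Fin D) (Fin D) ℂ}
    (hρ0 : ρ0.PosSemidef) (hρ1 : ρ1.PosSemidef) :
    (hρ1.sqrt * ρ0 * hρ1.sqrt).PosSemidef := by
  have h := hρ0.mul_mul_conjTranspose_same hρ1.sqrt
  rwa [hρ1.posSemidef_sqrt.isHermitian.eq] at h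

/-- The quantum fidelity of two `2×2` density matrices in Bloch-vector form:
`F(ρ0, ρ1) = (1/√2) √(1 + a·b + √(1 − ‖a‖²) √(1 − ‖b‖²))`. -/
theorem fidelity_two_dimensional (a b : Fin 3 → ℝ)
    (ha : ∑ i, (a i) ^ 2 ≤ 1) (hb : ∑ i, (b i) ^ 2 ≤ 1)
    (ρ0 ρ1 : Matrix (Fin 2) (Fin 2) ℂ)
    (hρ0def : ρ0 = (1 / 2 : ℂ) •
      (1 + (a 0 : ℂ) • !![0, 1; 1, 0] + (a 1 : ℂ) • !![0, -Complex.I; Complex.I, 0]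
         + (a 2 : ℂ) • !![1, 0; 0, -1]))
    (hρ1def : ρ1 = (1 / 2 : ℂ) •
      (1 + (b 0 : ℂ) • !![0, 1; 1, 0] + (b 1 : ℂ) • !![0, -Complex.I; Complex.I, 0]
         + (b 2 : ℂ) • !![1, 0; 0, -1]))
    (hρ0 : ρ0.PosSemidef) (hρ1 : ρ1.PosSemidef) :
    ((sandwichPosSemidef hρ0 hρ1).sqrt).trace.re
      = (1 / Real.sqrt 2) *
        Real.sqrt (1 + (∑ i, a i * b i) +
          Real.sqrt (1 - ∑ i, (a i) ^ 2) * Real.sqrt (1 - ∑ i, (b i) ^ 2)) := by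
  set M : Matrix (Fin 2) (Fin 2) ℂ := hρ1.sqrt * ρ0 * hρ1.sqrt with hMdef
  set hM : M.PosSemidef := sandwichPosSemidef hρ0 hρ1
  set lam : Fin 2 → ℝ := hM.1.eigenvalues with hlam
  have hl0 : 0 ≤ lam 0 := hM.eigenvalues_nonneg 0
  have hl1 : 0 ≤ lam 1 := hM.eigenvalues_nonneg 1
  set d : ℝ := ∑ i, a i * b i with hd
  set p : ℝ := 1 - ∑ i, (a i) ^ 2 with hp
  set q : ℝ := 1 - ∑ i, (b i) ^ 2 with hq
  have hp0 : 0 ≤ p := by simp [hp]; linarith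
  have hq0 : 0 ≤ q := by simp [hq]; linarith
  -- trace of M
  have htrM : M.trace = (((1 + d) / 2 : ℝ) : ℂ) := by
    have : M.trace = (ρ1 * ρ0).trace := by
      rw [hMdef, Matrix.trace_mul_cycle, mySqrtMulSelf hρ1]
    rw [this, hρ0def, hρ1def, hd]
    simp [Matrix.trace_fin_two, Matrix.mul_apply, Fin.sum_univ_two, Fin.sum_univ_three,
      Matrix.one_apply, Matrix.smul_apply, Matrix.add_apply]
    ring_nf
    simp [Complex.ext_iff]
    first
      | (constructor <;> ring)
      | ring
      | skip
  -- det of M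
  have hdetA : ρ0.det = ((p / 4 : ℝ) : ℂ) := by
    rw [hρ0def, hp]
    simp [Matrix.det_fin_two, Fin.sum_univ_three, Matrix.one_apply, Matrix.smul_apply,
      Matrix.add_apply]
    ring_nf
    simp [Complex.ext_iff]
    first
      | (constructor <;> ring)
      | ring
      | skip
  have hdetB : ρ1.det = ((q / 4 : ℝ) : ℂ) := by
    rw [hρ1def, hq]
    simp [Matrix.det_fin_two, Fin.sum_univ_three, Matrix.one_apply, Matrix.smul_apply,
      Matrix.add_apply]
    ring_nf
    simp [Complex.ext_iff]
    first
      | (constructor <;> ring)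
      | ring
      | skip
  have hdetM : M.det = ((p * q / 16 : ℝ) : ℂ) := by
    rw [hMdef, Matrix.det_mul, Matrix.det_mul, hdetA]
    have hs : hρ1.sqrt.det * hρ1.sqrt.det = ρ1.det := by
      rw [← Matrix.det_mul, mySqrtMulSelf hρ1]
    rw [mul_comm hρ1.sqrt.det _, mul_assoc, hs, hdetB]
    push_cast
    ring
  -- relate eigenvalues to trace and det
  have hsumC : M.trace = ((lam 0 + lam 1 : ℝ) : ℂ) := by
    rw [myTraceEig hM.1, Fin.sum_univ_two]; push_cast; rfl
  have hprodC : M.det = ((lam 0 * lam 1 : ℝ) : ℂ) := by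
    rw [hM.1.det_eq_prod_eigenvalues, Fin.prod_univ_two]; push_cast; rfl
  have hsum : lam 0 + lam 1 = (1 + d) / 2 := by
    have := hsumC.symm.trans htrM
    exact_mod_cast this
  have hprod : lam 0 * lam 1 = p * q / 16 := by
    have := hprodC.symm.trans hdetM
    exact_mod_cast this
  -- LHS is √λ0 + √λ1
  have hLHS : (hM.sqrt).trace.re = Real.sqrt (lam 0) + Real.sqrt (lam 1) := by
    rw [myTraceSqrt hM, Fin.sum_univ_two]
    simp [← hlam]
  rw [hLHS]
  -- real arithmetic
  have key : Real.sqrt (lam 0) + Real.sqrt (lam 1)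
      = Real.sqrt (lam 0 + lam 1 + 2 * Real.sqrt (lam 0 * lam 1)) := by
    rw [← Real.sqrt_sq (by positivity : (0:ℝ) ≤ Real.sqrt (lam 0) + Real.sqrt (lam 1))]
    congr 1
    rw [Real.sqrt_mul hl0]
    have h0 := Real.sq_sqrt hl0
    have h1 := Real.sq_sqrt hl1
    ring_nf
    nlinarith [h0, h1]
  rw [key]
  have hsq : Real.sqrt (lam 0 * lam 1) = Real.sqrt p * Real.sqrt q / 4 := by
    rw [hprod, show p * q / 16 = (p * q) / 4 ^ 2 by ring, Real.sqrt_div (by positivity),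
      Real.sqrt_mul hp0, Real.sqrt_sq (by norm_num : (0:ℝ) ≤ 4)]
  have hstep : lam 0 + lam 1 + 2 * Real.sqrt (lam 0 * lam 1)
      = (1 + d + Real.sqrt p * Real.sqrt q) / 2 := by
    rw [hsq, hsum]; ring
  have hx0 : 0 ≤ 1 + d + Real.sqrt p * Real.sqrt q := by
    have h2 : 0 ≤ lam 0 + lam 1 + 2 * Real.sqrt (lam 0 * lam 1) := by positivity
    linarith [hstep.symm.trans_le (le_of_eq rfl), h2]
  rw [hstep, Real.sqrt_div hx0 2, one_div, div_eq_inv_mul]
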